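/- For any nonnegative integer α > n, the ratio Pr(G+B_{n+1}=α)/Pr(G+B_n=α) equals exactly 1-p+p/q, where G is geometric on {0,1,...} with Pr(G=k)=q^k(1-q) and B_k is Binomial(k,p) independent of G. -/

import Mathlib

open Finset

/-- pmf of a geometric distribution on {0,1,2,...} with success parameter `1-q`. -/
noncomputable def geomPMF (q : ℝ) (k : ℕ) : ℝ := q ^ k * (1 - q)

/-- pmf of a Bernoulli distribution with parameter `p`. -/
noncomputable def bernPMF (p : ℝ) (k : ℕ) : ℝ :=
  if k = 0 then 1 - p else if k = 1 then p else 0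

/-- pmf of a Binomial(n, p) distribution. -/
noncomputable def binomPMF (n : ℕ) (p : ℝ) (k : ℕ) : ℝ :=
  (n.choose k : ℝ) * p ^ k * (1 - p) ^ (n - k)

/-- pmf of the sum of two independent random variables with pmfs `f` and `g`. -/
noncomputable def convPMF (f g : ℕ → ℝ) (α : ℕ) : ℝ :=
  ∑ k ∈ Finset.range (α + 1), f k * g (α - k)

lemma conv_eq_aux (p q : ℝ) (hq : q ≠ 0) {n α : ℕ} (hα : n ≤ α) :
    convPMF (geomPMF q) (binomPMF n p) α = (1 - q) * q ^ α * (1 - p + p / q) ^ n := by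
  unfold convPMF
  rw [← Finset.sum_range_reflect]
  have h1 : ∀ j ∈ Finset.range (α + 1),
      geomPMF q (α + 1 - 1 - j) * binomPMF n p (α - (α + 1 - 1 - j))
        = geomPMF q (α - j) * binomPMF n p j := by
    intro j hj
    simp only [Finset.mem_range] at hj
    have hjα : j ≤ α := Nat.lt_succ_iff.mp hj
    simp only [show α + 1 - 1 - j = α - j from by omega,
      show α - (α - j) = j from by omega]
  rw [Finset.sum_congr rfl h1]
  rw [← Finset.sum_subset (Finset.range_subset_range.mpr (Nat.succ_le_succ hα))
      (by
        intro j hj hj'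
        simp only [Finset.mem_range, Nat.lt_succ_iff, not_le] at hj hj'
        have : n.choose j = 0 := Nat.choose_eq_zero_of_lt hj'
        simp [binomPMF, this])]
  have hadd : (1 - p + p / q) ^ n
      = ∑ j ∈ Finset.range (n + 1), (p / q) ^ j * (1 - p) ^ (n - j) * (n.choose j : ℝ) := by
    rw [add_comm (1 - p) (p / q), add_pow]
  rw [hadd, Finset.mul_sum]
  refine Finset.sum_congr rfl ?_
  intro j hj
  simp only [Finset.mem_range, Nat.lt_succ_iff] at hj
  have hjα : j ≤ α := hj.trans hα
  rw [geomPMF, binomPMF, pow_sub₀ q hq hjα, div_pow]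
  field_simp

theorem geom_binom_succ_ratio_exact_large (p q : ℝ) (hp0 : 0 < p) (hp1 : p < 1)
    (hq0 : 0 < q) (hq1 : q < 1) (n α : ℕ) (hα : n < α) :
    convPMF (geomPMF q) (binomPMF (n + 1) p) α / convPMF (geomPMF q) (binomPMF n p) α
      = 1 - p + p / q := by
  have hq := hq0.ne'
  have hα' : n + 1 ≤ α := hα
  have hc : 0 < 1 - p + p / q := by
    have := div_pos hp0 hq0; linarith
  have hne : (1 - q) * q ^ α ≠ 0 :=
    mul_ne_zero (by linarith) (pow_ne_zero _ hq)
  have h2 : (1 : ℝ) - q ≠ 0 := by linarith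
  have h3 : q ^ α ≠ 0 := pow_ne_zero _ hq
  have h4 : (1 - p + p / q) ^ n ≠ 0 := pow_ne_zero _ hc.ne'
  have key : (1 - q) * q ^ α * (1 - p + p / q) ^ (n + 1)
      = ((1 - q) * q ^ α * (1 - p + p / q) ^ n) * (1 - p + p / q) := by ring
  rw [conv_eq_aux p q hq hα', conv_eq_aux p q hq hα.le, key,
    mul_div_cancel_left₀ _ (mul_ne_zero hne h4)]
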